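/- Let M be the ℤ[t^{±1}]-module ℤ[t^{±1}]/((t−2)(2t−1)). Then the submodules (t−2)·M and (2t−1)·M (the images of multiplication by t−2 and by 2t−1 on M) are distinct. -/

import Mathlib

open LaurentPolynomial

local notation "R" => LaurentPolynomial ℤ

noncomputable def tL : LaurentPolynomial ℤ := LaurentPolynomial.T 1

noncomputable def uHalf : ℚˣ := Units.mk0 (1/2) (by norm_num)

noncomputable def φ : LaurentPolynomial ℤ →ₐ[ℤ] ℚ :=
  AddMonoidAlgebra.lift ℤ ℚ ℤ ((Units.coeHom ℚ).comp (zpowersHom ℚˣ uHalf))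

lemma φ_tL : φ tL = 1/2 := by
  rw [tL, show (T 1 : LaurentPolynomial ℤ) = AddMonoidAlgebra.single 1 1 from rfl]
  rw [φ, AddMonoidAlgebra.lift_single]
  simp [uHalf]

theorem two_lagrangians_of_cyclic_module_are_distinct :
    LinearMap.range (LinearMap.lsmul (LaurentPolynomial ℤ)
        (R ⧸ (Ideal.span {(tL - 2) * (2 * tL - 1)} : Ideal R)) (tL - 2)) ≠
    LinearMap.range (LinearMap.lsmul (LaurentPolynomial ℤ)
        (R ⧸ (Ideal.span {(tL - 2) * (2 * tL - 1)} : Ideal R)) (2 * tL - 1)) := by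
  set I : Ideal R := Ideal.span {(tL - 2) * (2 * tL - 1)}
  intro h
  have h1 : (tL - 2) • (Ideal.Quotient.mk I 1) ∈
      LinearMap.range (LinearMap.lsmul (LaurentPolynomial ℤ) (R ⧸ I) (tL - 2)) :=
    ⟨Ideal.Quotient.mk I 1, rfl⟩
  rw [h] at h1
  obtain ⟨m, hm⟩ := h1
  obtain ⟨x, rfl⟩ := Ideal.Quotient.mk_surjective m
  simp only [LinearMap.lsmul_apply] at hm
  have hm' : Ideal.Quotient.mk I ((2 * tL - 1) * x) = Ideal.Quotient.mk I ((tL - 2) * 1) := hm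
  have hmem : (2 * tL - 1) * x - (tL - 2) * 1 ∈ I := by
    rw [← Ideal.Quotient.eq_zero_iff_mem, map_sub, sub_eq_zero, hm']
  rw [Ideal.mem_span_singleton] at hmem
  obtain ⟨y, hy⟩ := hmem
  have := congrArg φ hy
  simp only [map_sub, map_mul, map_one, map_ofNat, φ_tL] at this
  norm_num at this
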